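/- Let F be a field of characteristic 2 and let t, a₄, a₁₄, x, y ∈ F with x ≠ 0. Suppose y² = t·x⁴ + t·a₄²·x² + a₁₄·x. Define X = a₁₄/x + a₄²·t and Y = a₁₄·y/x². Then Y² = X³ + a₄⁴·t²·X + a₁₄²·t. -/

import Mathlib

/-- Computational content of Lemma 6.1 of the paper (case `a₉ = 0`): the equation
`y² = tx⁴ + ta₄²x² + a₁₄x` transforms into the Weierstrass form
`Y² = X³ + a₄⁴t²X + a₁₄²t` of its relative Jacobian. -/
theorem jacobian_weierstrass_form_of_eq_zero
    (F : Type*) [Field F] [CharP F 2]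
    (t a₄ a₁₄ x y : F) (hx : x ≠ 0)
    (heq : y ^ 2 = t * x ^ 4 + t * a₄ ^ 2 * x ^ 2 + a₁₄ * x)
    (X Y : F)
    (hX : X = a₁₄ / x + a₄ ^ 2 * t)
    (hY : Y = a₁₄ * y / x ^ 2) :
    Y ^ 2 = X ^ 3 + a₄ ^ 4 * t ^ 2 * X + a₁₄ ^ 2 * t := by
  have h2 : (2 : F) = 0 := by exact_mod_cast CharP.cast_eq_zero F 2
  subst hX hY
  field_simp
  rw [heq]
  ring_nf
  linear_combination (-(a₁₄^2*x^2*a₄^2*t + 2*a₁₄*x^3*a₄^4*t^2 + x^4*a₄^6*t^3)) * h2
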